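/- Let n ≥ 2 and f : S_n → ℝ. Define a_{ij} := ((n−1)/n)·(E[f | σ(i)=j] − E[f]) for i, j ∈ {1,…,n}, and f_a : S_n → ℝ by f_a(σ) = ∑_{i=1}^n a_{i,σ(i)}. Then: (1) ∑_{j=1}^n a_{ij} = 0 for every i and ∑_{i=1}^n a_{ij} = 0 for every j (i.e. the coefficient matrix is normalized); (2) for every b : {1,…,n}×{1,…,n} → ℝ such that the linear function g(σ) := ∑_{i=1}^n b_{i,σ(i)} has E[g] = 0, one has (1/n!)·∑_{σ∈S_n} f(σ)·g(σ) = (1/n!)·∑_{σ∈S_n} f_a(σ)·g(σ). (Consequently f_a is the orthogonal projection of f onto the space of mean-zero linear functions on S_n.) -/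

import Mathlib

open Equiv Finset

abbrev Perm' (n : ℕ) := Equiv.Perm (Fin n)

/-- `E[f] = (1/n!)·∑_σ f(σ)`, the expectation of `f` over the uniform measure on `Sₙ`. -/
noncomputable def expectation {n : ℕ} (f : Perm' n → ℝ) : ℝ :=
  (∑ σ : Perm' n, f σ) / n.factorial

/-- `E[f | σ(i) = j] = (1/(n-1)!)·∑_{σ : σ(i) = j} f(σ)`. -/
noncomputable def condExpectation {n : ℕ} (f : Perm' n → ℝ) (i j : Fin n) : ℝ :=
  (∑ σ ∈ Finset.univ.filter fun σ : Perm' n => σ i = j, f σ) / (n - 1).factorial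

/-- The coefficients `a_{ij}(f) = ((n-1)/n)·(E[f | σ(i)=j] − E[f])`. -/
noncomputable def coeff {n : ℕ} (f : Perm' n → ℝ) (i j : Fin n) : ℝ :=
  ((n : ℝ) - 1) / n * (condExpectation f i j - expectation f)

lemma card_fiber (n : ℕ) (i j : Fin n) :
    (Finset.univ.filter fun σ : Perm' n => σ i = j).card = (n-1).factorial := by
  have hpos : 0 < n := i.pos
  have hconst : ∀ j' : Fin n,
      (univ.filter fun σ : Perm' n => σ i = j').card
        = (univ.filter fun σ : Perm' n => σ i = j).card := by
    intro j'
    apply Finset.card_equiv (Equiv.mulLeft (Equiv.swap j' j))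
    intro σ
    simp only [mem_filter, mem_univ, true_and, Equiv.coe_mulLeft, Equiv.Perm.mul_apply]
    constructor
    · rintro h; rw [h, Equiv.swap_apply_left]
    · intro h
      exact (Equiv.swap j' j).injective (h.trans (Equiv.swap_apply_left j' j).symm)
  have hsum : (univ : Finset (Perm' n)).card
      = ∑ j' : Fin n, (univ.filter fun σ : Perm' n => σ i = j').card :=
    Finset.card_eq_sum_card_fiberwise (fun σ _ => mem_univ _)
  have h1 : n.factorial = n * (univ.filter fun σ : Perm' n => σ i = j).card := by
    conv_lhs => rw [← Fintype.card_fin n, ← Fintype.card_perm, ← Finset.card_univ, hsum]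
    simp [hconst, Finset.sum_const, Finset.card_univ, mul_comm]
  have h2 := Nat.mul_factorial_pred hpos.ne'
  exact (Nat.eq_of_mul_eq_mul_left hpos (by omega)).symm

lemma card_fiber2 (n : ℕ) (hn : 2 ≤ n) {i k j l : Fin n} (hik : i ≠ k) (hjl : j ≠ l) :
    (Finset.univ.filter fun σ : Perm' n => σ i = j ∧ σ k = l).card = (n-2).factorial := by
  have hconst : ∀ l' : Fin n, l' ≠ j →
      (univ.filter fun σ : Perm' n => σ i = j ∧ σ k = l').card
        = (univ.filter fun σ : Perm' n => σ i = j ∧ σ k = l).card := by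
    intro l' hl'
    have hfix : Equiv.swap l' l j = j := Equiv.swap_apply_of_ne_of_ne (Ne.symm hl') hjl
    apply Finset.card_equiv (Equiv.mulLeft (Equiv.swap l' l))
    intro σ
    simp only [mem_filter, mem_univ, true_and, Equiv.coe_mulLeft, Equiv.Perm.mul_apply]
    constructor
    · rintro ⟨h1, h2⟩
      exact ⟨by rw [h1, hfix], by rw [h2, Equiv.swap_apply_left]⟩
    · rintro ⟨h1, h2⟩
      exact ⟨(Equiv.swap l' l).injective (h1.trans hfix.symm),
        (Equiv.swap l' l).injective (h2.trans (Equiv.swap_apply_left l' l).symm)⟩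
  have hempty : (univ.filter fun σ : Perm' n => σ i = j ∧ σ k = j).card = 0 := by
    rw [Finset.card_eq_zero, Finset.filter_eq_empty_iff]
    rintro σ - ⟨h1, h2⟩
    exact hik (σ.injective (h1.trans h2.symm))
  have hsum : (univ.filter fun σ : Perm' n => σ i = j).card
      = ∑ l' : Fin n, ((univ.filter fun σ : Perm' n => σ i = j).filter
          fun σ => σ k = l').card :=
    Finset.card_eq_sum_card_fiberwise (fun σ _ => mem_univ _)
  simp only [Finset.filter_filter] at hsum
  rw [card_fiber] at hsum
  rw [← Finset.add_sum_erase _ _ (mem_univ j), hempty, zero_add] at hsum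
  rw [Finset.sum_congr rfl (fun l' hl' => hconst l' (Finset.ne_of_mem_erase hl')),
    Finset.sum_const, smul_eq_mul, Finset.card_erase_of_mem (mem_univ j),
    Finset.card_univ, Fintype.card_fin] at hsum
  have h2 : (n-1).factorial = (n-1) * (n-2).factorial := by
    have : n - 1 = (n-2) + 1 := by omega
    rw [this, Nat.factorial_succ]
  have hpos : 0 < n - 1 := by omega
  refine (Nat.eq_of_mul_eq_mul_left hpos ?_).symm
  omega

lemma expand (n : ℕ) (h : Perm' n → ℝ) (b : Fin n → Fin n → ℝ) :
    ∑ σ : Perm' n, h σ * ∑ i, b i (σ i)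
      = ∑ i, ∑ j, b i j * ∑ σ ∈ Finset.univ.filter (fun σ : Perm' n => σ i = j), h σ := by
  simp_rw [Finset.mul_sum]
  rw [Finset.sum_comm]
  refine Finset.sum_congr rfl fun i _ => ?_
  rw [← Finset.sum_fiberwise_of_maps_to (g := fun σ : Perm' n => σ i)
      (fun σ _ => mem_univ _) (fun σ => h σ * b i (σ i))]
  refine Finset.sum_congr rfl fun j _ => ?_
  exact Finset.sum_congr rfl fun σ hσ => by rw [(Finset.mem_filter.mp hσ).2, mul_comm]

lemma row_sum (n : ℕ) (f : Perm' n → ℝ) (i : Fin n) :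
    ∑ j : Fin n, ∑ σ ∈ Finset.univ.filter (fun σ : Perm' n => σ i = j), f σ
      = ∑ σ : Perm' n, f σ :=
  Finset.sum_fiberwise_of_maps_to (fun σ _ => mem_univ _) f

lemma col_sum (n : ℕ) (f : Perm' n → ℝ) (j : Fin n) :
    ∑ i : Fin n, ∑ σ ∈ Finset.univ.filter (fun σ : Perm' n => σ i = j), f σ
      = ∑ σ : Perm' n, f σ := by
  simp_rw [Finset.sum_filter]
  rw [Finset.sum_comm]
  refine Finset.sum_congr rfl fun σ _ => ?_
  have : ∀ i : Fin n, σ i = j ↔ i = σ⁻¹ j := by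
    intro i; constructor
    · intro h; rw [← h]; exact (Equiv.symm_apply_apply σ i).symm
    · intro h; rw [h]; exact Equiv.apply_symm_apply σ j
  simp_rw [this]
  simp

lemma fact_cast (n : ℕ) (hn : 2 ≤ n) :
    (n.factorial : ℝ) = n * (n-1).factorial := by
  rw [← Nat.mul_factorial_pred (by omega : n ≠ 0)]
  push_cast; ring

lemma sum_coeff_row (n : ℕ) (hn : 2 ≤ n) (f : Perm' n → ℝ) (i : Fin n) :
    ∑ j, coeff f i j = 0 := by
  have hne : ((n-1).factorial : ℝ) ≠ 0 := Nat.cast_ne_zero.mpr (Nat.factorial_ne_zero _)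
  have hn0 : (n:ℝ) ≠ 0 := Nat.cast_ne_zero.mpr (by omega)
  simp only [coeff, ← Finset.mul_sum]
  rw [Finset.sum_sub_distrib]
  unfold condExpectation
  rw [← Finset.sum_div, row_sum, Finset.sum_const, Finset.card_univ, Fintype.card_fin]
  unfold expectation
  rw [fact_cast n hn, nsmul_eq_mul]
  field_simp
  ring

lemma sum_coeff_col (n : ℕ) (hn : 2 ≤ n) (f : Perm' n → ℝ) (j : Fin n) :
    ∑ i, coeff f i j = 0 := by
  have hne : ((n-1).factorial : ℝ) ≠ 0 := Nat.cast_ne_zero.mpr (Nat.factorial_ne_zero _)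
  have hn0 : (n:ℝ) ≠ 0 := Nat.cast_ne_zero.mpr (by omega)
  simp only [coeff, ← Finset.mul_sum]
  rw [Finset.sum_sub_distrib]
  unfold condExpectation
  rw [← Finset.sum_div, col_sum, Finset.sum_const, Finset.card_univ, Fintype.card_fin]
  unfold expectation
  rw [fact_cast n hn, nsmul_eq_mul]
  field_simp
  ring

lemma T_fa (n : ℕ) (hn : 2 ≤ n) (f : Perm' n → ℝ) (i j : Fin n) :
    ∑ σ ∈ Finset.univ.filter (fun σ : Perm' n => σ i = j), (∑ k, coeff f k (σ k))
      = (n-1).factorial * condExpectation f i j - (n-1).factorial * expectation f := by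
  rw [Finset.sum_comm, ← Finset.add_sum_erase _ _ (mem_univ i)]
  have hterm_i : ∑ σ ∈ Finset.univ.filter (fun σ : Perm' n => σ i = j), coeff f i (σ i)
      = ((n-1).factorial : ℝ) * coeff f i j := by
    rw [Finset.sum_congr rfl (fun σ hσ => by rw [(Finset.mem_filter.mp hσ).2]),
      Finset.sum_const, card_fiber, nsmul_eq_mul]
  have hterm_k : ∀ k ∈ Finset.univ.erase i,
      ∑ σ ∈ Finset.univ.filter (fun σ : Perm' n => σ i = j), coeff f k (σ k)
        = -(((n-2).factorial : ℝ) * coeff f k j) := by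
    intro k hk
    have hik : i ≠ k := (Finset.ne_of_mem_erase hk).symm
    rw [← Finset.sum_fiberwise_of_maps_to (g := fun σ : Perm' n => σ k)
        (fun σ _ => mem_univ _) (fun σ => coeff f k (σ k))]
    have inner : ∀ l : Fin n,
        ∑ σ ∈ (Finset.univ.filter (fun σ : Perm' n => σ i = j)).filter
            (fun σ => σ k = l), coeff f k (σ k)
          = (if l = j then 0 else ((n-2).factorial : ℝ)) * coeff f k l := by
      intro l
      have hcard : (((Finset.univ.filter (fun σ : Perm' n => σ i = j ∧ σ k = l)).card : ℕ) : ℝ)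
          = (if l = j then 0 else ((n-2).factorial : ℝ)) := by
        by_cases hl : l = j
        · rw [if_pos hl]
          norm_cast
          rw [Finset.card_eq_zero, Finset.filter_eq_empty_iff]
          rintro σ - ⟨h1, h2⟩
          exact hik (σ.injective (h1.trans (h2.trans hl).symm))
        · rw [if_neg hl, card_fiber2 n hn hik (fun h => hl h.symm)]
      rw [Finset.sum_congr rfl (fun σ hσ => by rw [(Finset.mem_filter.mp hσ).2]),
        Finset.sum_const, nsmul_eq_mul, Finset.filter_filter, hcard]
    rw [Finset.sum_congr rfl (fun l _ => inner l)]
    rw [← Finset.add_sum_erase _ _ (mem_univ j), if_pos rfl, zero_mul, zero_add]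
    have : ∀ l ∈ Finset.univ.erase j,
        (if l = j then 0 else ((n-2).factorial : ℝ)) * coeff f k l
          = ((n-2).factorial : ℝ) * coeff f k l := by
      intro l hl; rw [if_neg (Finset.ne_of_mem_erase hl)]
    rw [Finset.sum_congr rfl this, ← Finset.mul_sum]
    have hrow : ∑ l ∈ Finset.univ.erase j, coeff f k l = -coeff f k j := by
      have := sum_coeff_row n hn f k
      rw [← Finset.add_sum_erase _ _ (mem_univ j)] at this
      linarith
    rw [hrow]; ring
  rw [Finset.sum_congr rfl hterm_k, hterm_i]
  have hcol : ∑ k ∈ Finset.univ.erase i, coeff f k j = -coeff f i j := by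
    have := sum_coeff_col n hn f j
    rw [← Finset.add_sum_erase _ _ (mem_univ i)] at this
    linarith
  rw [Finset.sum_neg_distrib, ← Finset.mul_sum, hcol]
  have hfac : ((n-1).factorial : ℝ) = ((n:ℝ) - 1) * (n-2).factorial := by
    have h1 : n - 1 = (n-2) + 1 := by omega
    rw [h1, Nat.factorial_succ]
    push_cast
    have : ((n - 2 : ℕ) : ℝ) = (n : ℝ) - 2 := by
      have : (2:ℕ) ≤ n := hn; push_cast [Nat.cast_sub this]; ring
    rw [this]; ring
  have hn0 : (n:ℝ) ≠ 0 := Nat.cast_ne_zero.mpr (by omega)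
  rw [coeff, hfac]
  field_simp
  ring

/-- The coefficients `a_{ij}(f)` form a normalized matrix, and the linear function
`f_a(σ) = ∑_i a_{i,σ(i)}(f)` has the same inner product as `f` with every mean-zero
linear function; i.e. `f_a` is the normalized form of the level-1 projection of `f`. -/
theorem normalized_form_of_level_one (n : ℕ) (hn : 2 ≤ n) (f : Perm' n → ℝ) :
    (∀ i, ∑ j, coeff f i j = 0) ∧ (∀ j, ∑ i, coeff f i j = 0) ∧
    ∀ b : Fin n → Fin n → ℝ,
      (∑ σ : Perm' n, ∑ i, b i (σ i)) / n.factorial = 0 →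
      (∑ σ : Perm' n, f σ * ∑ i, b i (σ i)) / n.factorial =
        (∑ σ : Perm' n, (∑ i, coeff f i (σ i)) * ∑ i, b i (σ i)) / n.factorial := by
  refine ⟨fun i => sum_coeff_row n hn f i, fun j => sum_coeff_col n hn f j, fun b hb => ?_⟩
  have hfacne : (n.factorial : ℝ) ≠ 0 := Nat.cast_ne_zero.mpr (Nat.factorial_ne_zero _)
  have hfac1ne : ((n-1).factorial : ℝ) ≠ 0 := Nat.cast_ne_zero.mpr (Nat.factorial_ne_zero _)
  have hg : ∑ σ : Perm' n, ∑ i, b i (σ i) = 0 := by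
    rcases (div_eq_zero_iff.mp hb) with h | h
    · exact h
    · exact absurd h hfacne
  have hb0 : ∑ i, ∑ j, b i j = 0 := by
    have h1 := expand n (fun _ => (1:ℝ)) b
    simp only [one_mul, Finset.sum_const, card_fiber, nsmul_eq_mul, mul_one] at h1
    rw [hg] at h1
    have h2 : ∑ i : Fin n, ∑ j : Fin n, b i j * ((n-1).factorial : ℝ)
        = (∑ i : Fin n, ∑ j : Fin n, b i j) * ((n-1).factorial : ℝ) := by
      simp only [← Finset.sum_mul]
    rw [h2] at h1
    exact (mul_eq_zero.mp h1.symm).resolve_right hfac1ne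
  congr 1
  rw [expand n f b, expand n (fun σ => ∑ i, coeff f i (σ i)) b]
  have hstep : ∀ i j : Fin n, b i j * ∑ σ ∈ Finset.univ.filter (fun σ : Perm' n => σ i = j), f σ
      = b i j * (∑ σ ∈ Finset.univ.filter (fun σ : Perm' n => σ i = j), ∑ k, coeff f k (σ k))
        + b i j * (((n-1).factorial : ℝ) * expectation f) := by
    intro i j
    rw [T_fa n hn f i j]
    have hTf : ∑ σ ∈ Finset.univ.filter (fun σ : Perm' n => σ i = j), f σ
        = ((n-1).factorial : ℝ) * condExpectation f i j := by
      rw [condExpectation]; field_simp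
    rw [hTf]; ring
  rw [Finset.sum_congr rfl (fun i _ => Finset.sum_congr rfl (fun j _ => hstep i j))]
  simp only [Finset.sum_add_distrib]
  have hz : ∑ i : Fin n, ∑ j : Fin n, b i j * (((n-1).factorial : ℝ) * expectation f) = 0 := by
    simp only [← Finset.sum_mul]
    rw [hb0, zero_mul]
  rw [hz, add_zero]
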